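/- Let R(t) = 256(t^2-t+1)^3/(t^2(1-t)^2). For all real t with 1/2 < t < 1 and R(t) ≥ 1000000, we have R(t) ≤ 265(t-1)^{-2} and 0 < R(-t) - 1728 ≤ 1363(t-1)^2. -/

import Mathlib

noncomputable def R (t : ℝ) : ℝ := 256 * (t ^ 2 - t + 1) ^ 3 / (t ^ 2 * (1 - t) ^ 2)

theorem stmt1 (t : ℝ) (h1 : 1 / 2 < t) (h2 : t < 1) (h3 : R t ≥ 1000000) :
    R t ≤ 265 * (t - 1) ^ (-2 : ℤ) ∧ 0 < R (-t) - 1728 ∧ R (-t) - 1728 ≤ 1363 * (t - 1) ^ 2 := by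
  have ht0 : 0 < t := by linarith
  have h1t : 0 < 1 - t := by linarith
  have hden : 0 < t ^ 2 * (1 - t) ^ 2 := by positivity
  rw [ge_iff_le, R, le_div_iff₀ hden] at h3
  have hkey : 1 - t ≤ 32 / 1000 := by
    nlinarith [sq_nonneg (t - 1), sq_nonneg (t ^ 2 - t + 1), sq_nonneg t,
      mul_pos ht0 h1t, sq_nonneg (1 - t - 32/1000)]
  refine ⟨?_, ?_, ?_⟩
  · have hne : t - 1 ≠ 0 := by intro h; linarith [sub_eq_zero.mp h]
    rw [show ((-2 : ℤ)) = -(2 : ℤ) by norm_num, zpow_neg, ← div_eq_mul_inv]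
    rw [R, div_le_div_iff₀ hden (by positivity : (0:ℝ) < (t-1) ^ (2:ℤ))]
    have h2' : (t - 1 : ℝ) ^ (2 : ℤ) = (1 - t) ^ 2 := by
      rw [show ((2:ℤ)) = ((2:ℕ) : ℤ) by norm_num, zpow_natCast]
      ring
    rw [h2']
    have hfac : 256 * (t ^ 2 - t + 1) ^ 3 ≤ 265 * t ^ 2 := by
      nlinarith [mul_nonneg (sub_nonneg.2 hkey) h1t.le,
        mul_nonneg (mul_nonneg (sub_nonneg.2 hkey) h1t.le) h1t.le,
        mul_nonneg (mul_nonneg (mul_nonneg (sub_nonneg.2 hkey) h1t.le) h1t.le) h1t.le,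
        sq_nonneg (1 - t), mul_pos ht0 h1t]
    nlinarith [hfac, sq_nonneg (1 - t), mul_nonneg (sub_nonneg.2 hfac) (sq_nonneg (1 - t))]
  · have hid : R (-t) - 1728 =
        64 * (t + 2) ^ 2 * (2 * t + 1) ^ 2 * (t - 1) ^ 2 / (t ^ 2 * (t + 1) ^ 2) := by
      rw [R]
      have h1 : t ^ 2 ≠ 0 := by positivity
      have h2 : (t + 1 : ℝ) ≠ 0 := by positivity
      have h3 : (1 - -t : ℝ) ≠ 0 := ne_of_gt (by linarith)
      field_simp
      ring
    rw [hid]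
    have hnum : 0 < 64 * (t + 2) ^ 2 * (2 * t + 1) ^ 2 * (t - 1) ^ 2 := by
      have e : 64 * (t + 2) ^ 2 * (2 * t + 1) ^ 2 * (t - 1) ^ 2
          = 64 * (t + 2) ^ 2 * (2 * t + 1) ^ 2 * ((1 - t) * (1 - t)) := by ring
      rw [e]
      positivity
    positivity
  · have hid : R (-t) - 1728 =
        64 * (t + 2) ^ 2 * (2 * t + 1) ^ 2 * (t - 1) ^ 2 / (t ^ 2 * (t + 1) ^ 2) := by
      rw [R]
      have h1 : t ^ 2 ≠ 0 := by positivity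
      have h2 : (t + 1 : ℝ) ≠ 0 := by positivity
      have h3 : (1 - -t : ℝ) ≠ 0 := ne_of_gt (by linarith)
      field_simp
      ring
    rw [hid, div_le_iff₀ (by positivity : (0:ℝ) < t ^ 2 * (t + 1) ^ 2)]
    have hfac : 64 * (t + 2) ^ 2 * (2 * t + 1) ^ 2 ≤ 1363 * (t ^ 2 * (t + 1) ^ 2) := by
      nlinarith [sq_nonneg (1 - t), mul_pos ht0 h1t, sq_nonneg (t - 1)]
    nlinarith [sq_nonneg (t - 1), hfac, sq_nonneg ((t-1) * (t - 1))]
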